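/- Let σ be a positive definite density matrix, Δ_σ(X) = σXσ⁻¹ the modular operator, and Γ_σ(X) = σ^{1/2} X σ^{1/2}. Suppose K is a matrix with tr(K) real such that the map Φ(X) = K†X + XK satisfies Γ_σ ∘ Φ = Φ† ∘ Γ_σ (KMS self-adjointness), where Φ† is the Hilbert–Schmidt adjoint. Then Δ_σ^{−1/2}(K) = K†, i.e., σ^{−1/2} K σ^{1/2} = K†. -/

import Mathlib

open Matrix
open scoped ComplexOrder

/-- If `Φ(X) = KᴴX + XK` is KMS self-adjoint, `Γ_σ ∘ Φ = Φ† ∘ Γ_σ`, and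
`tr(K)` is real, then `σ^{−1/2} K σ^{1/2} = Kᴴ`. -/
theorem stmt_17 {N : ℕ} (σ R : Matrix (Fin N) (Fin N) ℂ)
    (hσ : σ.PosDef) (hσtr : σ.trace = 1)
    (hR : R.PosDef) (hR2 : R * R = σ)
    (K : Matrix (Fin N) (Fin N) ℂ)
    (htr : (K.trace).im = 0)
    (hKMS : ∀ X : Matrix (Fin N) (Fin N) ℂ,
      R * (Kᴴ * X + X * K) * R =
        K * (R * X * R) + (R * X * R) * Kᴴ) :
    R⁻¹ * K * R = Kᴴ := by
  rcases Nat.eq_zero_or_pos N with hN | hN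
  · subst hN; ext i; exact i.elim0
  have hRu : IsUnit R.det := by
    simpa [isUnit_iff_ne_zero] using hR.det_pos.ne'
  have hinv : R⁻¹ * R = 1 := nonsing_inv_mul R hRu
  have hinv' : R * R⁻¹ = 1 := mul_nonsing_inv R hRu
  -- key: for all Y, (R Kᴴ R⁻¹) Y + Y (R⁻¹ K R) = K Y + Y Kᴴ
  have key : ∀ Y : Matrix (Fin N) (Fin N) ℂ,
      (R * Kᴴ * R⁻¹) * Y + Y * (R⁻¹ * K * R) = K * Y + Y * Kᴴ := by
    intro Y
    have h := hKMS (R⁻¹ * Y * R⁻¹)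
    have e1 : R * (R⁻¹ * Y * R⁻¹) * R = Y := by
      rw [show R * (R⁻¹ * Y * R⁻¹) * R = (R * R⁻¹) * Y * (R⁻¹ * R) by noncomm_ring,
        hinv, hinv', one_mul, mul_one]
    rw [e1] at h
    calc (R * Kᴴ * R⁻¹) * Y + Y * (R⁻¹ * K * R)
        = R * (Kᴴ * (R⁻¹ * Y * R⁻¹) + (R⁻¹ * Y * R⁻¹) * K) * R := by
          rw [mul_add, add_mul]
          congr 1
          · rw [show R * (Kᴴ * (R⁻¹ * Y * R⁻¹)) * R
                = R * Kᴴ * R⁻¹ * Y * (R⁻¹ * R) by noncomm_ring, hinv, mul_one]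
          · rw [show R * (R⁻¹ * Y * R⁻¹ * K) * R
                = (R * R⁻¹) * (Y * (R⁻¹ * K * R)) by noncomm_ring, hinv', one_mul]
      _ = K * Y + Y * Kᴴ := h
  set A : Matrix (Fin N) (Fin N) ℂ := R * Kᴴ * R⁻¹ - K with hA
  set B : Matrix (Fin N) (Fin N) ℂ := Kᴴ - R⁻¹ * K * R with hB
  have hAY : ∀ Y, A * Y = Y * B := by
    intro Y
    rw [hA, hB, sub_mul, mul_sub, sub_eq_sub_iff_add_eq_add]
    rw [key Y]; exact add_comm _ _
  have hAB : A = B := by simpa using hAY 1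
  have hcomm : ∀ Y, Commute A Y := fun Y => by
    have := hAY Y; rw [← hAB] at this; exact this
  obtain ⟨r, hr⟩ := mem_range_scalar_of_commute_single (fun i j _ => (hcomm (single i j 1)).symm)
  have htrA : A.trace = 0 := by
    have h1 : (R * Kᴴ * R⁻¹).trace = Kᴴ.trace := by
      rw [trace_mul_cycle, hinv, one_mul]
    have h2 : Kᴴ.trace = star K.trace := trace_conjTranspose K
    have h3 : star K.trace = K.trace := by
      rw [Complex.star_def, Complex.conj_eq_iff_im]; exact htr
    rw [hA, trace_sub, h1, h2, h3, sub_self]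
  have hr0 : r = 0 := by
    have hNr : A.trace = (N : ℂ) * r := by
      rw [← hr]
      simp [Matrix.scalar_apply, trace_diagonal, Finset.sum_const, Finset.card_univ]
    rw [htrA] at hNr
    have hN' : (N : ℂ) ≠ 0 := Nat.cast_ne_zero.mpr hN.ne'
    exact (mul_eq_zero.mp hNr.symm).resolve_left hN'
  have hA0 : A = 0 := by rw [← hr, hr0]; simp
  have hB0 : B = 0 := hAB ▸ hA0
  rw [hB] at hB0
  exact (sub_eq_zero.mp hB0).symm
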